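/- Let (r*, α*) be an optimal solution to the triangle convex program CP_tr(G). For a vertex u, let X = {v : r*_v > r*_u} and Y = {v : r*_v = r*_u}. Then removing any nonempty subset Q ⊆ X ∪ Y from G[X ∪ Y] removes at least r*_u · |Q| triangles of G[X ∪ Y]. -/
import Mathlib


open Finset

variable {V : Type*} [Fintype V] [DecidableEq V]

/-- The set of triangles (3-cliques) of `G`, as 3-element vertex sets. -/
def triFinset (G : SimpleGraph V) [DecidableRel G.Adj] : Finset (Finset V) :=
  Finset.univ.filter fun t => t.card = 3 ∧ ∀ u ∈ t, ∀ v ∈ t, u ≠ v → G.Adj u v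

/-- Number of triangles of `G` with all vertices in `S`. -/
def triCount (G : SimpleGraph V) [DecidableRel G.Adj] (S : Finset V) : ℕ :=
  ((triFinset G).filter fun t => t ⊆ S).card

/-- Triangle density |T(G[S])|/|S|. -/
noncomputable def trDensity (G : SimpleGraph V) [DecidableRel G.Adj] (S : Finset V) : ℝ :=
  (triCount G S : ℝ) / (S.card : ℝ)

/-- `G[S]` is ρ-tr-compact: connected, and removing any nonempty `U ⊆ S`
removes at least `ρ * |U|` triangles. -/
def IsTrCompactSub (G : SimpleGraph V) [DecidableRel G.Adj] (ρ : ℝ) (S : Finset V) : Prop :=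
  0 ≤ ρ ∧ (G.induce (S : Set V)).Connected ∧
  ∀ U ⊆ S, U.Nonempty →
    ρ * (U.card : ℝ) ≤ (triCount G S : ℝ) - (triCount G (S \ U) : ℝ)

/-- `G[S]` is a locally triangle-densest subgraph. -/
def IsLTDS (G : SimpleGraph V) [DecidableRel G.Adj] (S : Finset V) : Prop :=
  IsTrCompactSub G (trDensity G S) S ∧
  ∀ S' : Finset V, S ⊂ S' → ¬ IsTrCompactSub G (trDensity G S) S'

/-- The triangle-compact number of `u`. -/
noncomputable def trCompactNum (G : SimpleGraph V) [DecidableRel G.Adj] (u : V) : ℝ :=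
  sSup {ρ : ℝ | ∃ S : Finset V, u ∈ S ∧ IsTrCompactSub G ρ S}

/-- Feasibility for the triangle convex program CP_tr(G). -/
def CPtrFeasible (G : SimpleGraph V) [DecidableRel G.Adj]
    (r : V → ℝ) (α : V → Finset V → ℝ) : Prop :=
  (∀ u, r u = ∑ t ∈ (triFinset G).filter (fun t => u ∈ t), α u t) ∧
  (∀ t ∈ triFinset G, ∑ u ∈ t, α u t = 1) ∧
  (∀ t ∈ triFinset G, ∀ u ∈ t, 0 ≤ α u t)

/-- Optimality for CP_tr(G). -/
def CPtrOptimal (G : SimpleGraph V) [DecidableRel G.Adj]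
    (r : V → ℝ) (α : V → Finset V → ℝ) : Prop :=
  CPtrFeasible G r α ∧
  ∀ r' α', CPtrFeasible G r' α' → ∑ u, (r u) ^ 2 ≤ ∑ u, (r' u) ^ 2

lemma cptr_exchange (G : SimpleGraph V) [DecidableRel G.Adj]
    (r : V → ℝ) (α : V → Finset V → ℝ) (hopt : CPtrOptimal G r α)
    {t : Finset V} (ht : t ∈ triFinset G) {v w : V} (hv : v ∈ t) (hw : w ∈ t)
    (hpos : 0 < α v t) : r v ≤ r w := by
  by_contra hlt
  push_neg at hlt
  have hvw : v ≠ w := fun h => absurd h.symm (fun h' => absurd (h' ▸ hlt) (lt_irrefl _))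
  obtain ⟨⟨hr, hsum, hnn⟩, hmin⟩ := hopt
  set ε : ℝ := min (α v t) ((r v - r w)/2) with hε
  have hε0 : 0 < ε := lt_min hpos (by linarith)
  have hεα : ε ≤ α v t := min_le_left _ _
  have hεr : ε ≤ (r v - r w)/2 := min_le_right _ _
  set α' : V → Finset V → ℝ := fun x s =>
    α x s + (if x = v ∧ s = t then -ε else 0) + (if x = w ∧ s = t then ε else 0) with hα'
  set r' : V → ℝ := fun x => ∑ s ∈ (triFinset G).filter (fun s => x ∈ s), α' x s with hr'
  have htv : t ∈ (triFinset G).filter (fun s => v ∈ s) := mem_filter.2 ⟨ht, hv⟩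
  have htw : t ∈ (triFinset G).filter (fun s => w ∈ s) := mem_filter.2 ⟨ht, hw⟩
  have hr'eq : ∀ x, r' x = r x + (if x = v then -ε else 0) + (if x = w then ε else 0) := by
    intro x
    simp only [hr', hα', Finset.sum_add_distrib]
    congr 1
    · congr 1
      · exact (hr x).symm
      · by_cases hx : x = v
        · subst hx
          simp only [true_and]
          rw [Finset.sum_ite_eq']
          simp [htv]
        · simp [hx]
    · by_cases hx : x = w
      · subst hx
        simp only [true_and]
        rw [Finset.sum_ite_eq']
        simp [htw]
      · simp [hx]
  have hfeas' : CPtrFeasible G r' α' := by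
    refine ⟨fun x => rfl, ?_, ?_⟩
    · intro s hs
      simp only [hα', Finset.sum_add_distrib]
      by_cases hst : s = t
      · subst hst
        have h1 : ∑ x ∈ s, (if x = v ∧ s = s then -ε else 0) = -ε := by
          simp only [and_true]
          rw [Finset.sum_ite_eq' s v (fun _ => -ε)]; simp [hv]
        have h2 : ∑ x ∈ s, (if x = w ∧ s = s then ε else 0) = ε := by
          simp only [and_true]
          rw [Finset.sum_ite_eq' s w (fun _ => ε)]; simp [hw]
        rw [h1, h2, hsum s hs]; ring
      · have h1 : ∑ x ∈ s, (if x = v ∧ s = t then -ε else 0) = 0 := by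
          simp [hst]
        have h2 : ∑ x ∈ s, (if x = w ∧ s = t then ε else 0) = 0 := by
          simp [hst]
        rw [h1, h2, hsum s hs]; ring
    · intro s hs x hx
      have hα0 := hnn s hs x hx
      simp only [hα']
      split_ifs with h1 h2 h2
      · exact absurd (h1.1.symm.trans h2.1) hvw
      · rw [h1.1, h1.2] at hα0 ⊢
        linarith
      · linarith
      · linarith
  have hle := hmin r' α' hfeas'
  have hsq : ∀ x, (r' x)^2 = (r x)^2 +
      ((if x = v then (r v - ε)^2 - (r v)^2 else 0) +
       (if x = w then (r w + ε)^2 - (r w)^2 else 0)) := by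
    intro x
    rw [hr'eq x]
    split_ifs with h1 h2 h2
    · exact absurd (h1.symm.trans h2) hvw
    · rw [h1]; ring
    · rw [h2]; ring
    · ring
  have hsum2 : ∑ x, (r' x)^2 = ∑ x, (r x)^2 + (((r v - ε)^2 - (r v)^2) + ((r w + ε)^2 - (r w)^2)) := by
    simp only [hsq]
    rw [Finset.sum_add_distrib, Finset.sum_add_distrib]
    congr 1
    congr 1
    · rw [Finset.sum_ite_eq' Finset.univ v (fun _ => (r v - ε)^2 - (r v)^2)]
      simp
    · rw [Finset.sum_ite_eq' Finset.univ w (fun _ => (r w + ε)^2 - (r w)^2)]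
      simp
  rw [hsum2] at hle
  nlinarith [hε0, hεr]

/-- removing any nonempty `Q ⊆ X ∪ Y` removes at least
`r u * |Q|` triangles of `G[X ∪ Y]`. -/
theorem cptr_optimal_level_set_trcompact (G : SimpleGraph V) [DecidableRel G.Adj]
    (r : V → ℝ) (α : V → Finset V → ℝ) (hopt : CPtrOptimal G r α) (u : V) :
    ∀ Q ⊆ Finset.univ.filter (fun v => r u ≤ r v), Q.Nonempty →
      r u * (Q.card : ℝ) ≤
        (triCount G (Finset.univ.filter (fun v => r u ≤ r v)) : ℝ) -
        (triCount G ((Finset.univ.filter (fun v => r u ≤ r v)) \ Q) : ℝ) := by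
  intro Q hQS hQne
  obtain ⟨⟨hr, hsum, hnn⟩, -⟩ := id hopt
  set S := Finset.univ.filter (fun v => r u ≤ r v) with hS
  set D := (triFinset G).filter (fun t => t ⊆ S ∧ ¬ t ⊆ S \ Q) with hD
  have hsupp : ∀ v ∈ S, ∀ t ∈ triFinset G, v ∈ t → α v t ≠ 0 → t ⊆ S := by
    intro v hvS t ht hvt hne w hwt
    have hpos : 0 < α v t := lt_of_le_of_ne (hnn t ht v hvt) (Ne.symm hne)
    have hle := cptr_exchange G r α hopt ht hvt hwt hpos
    simp only [hS, mem_filter, mem_univ, true_and] at hvS ⊢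
    exact le_trans hvS hle
  have hrv : ∀ v ∈ Q, r v = ∑ t ∈ D.filter (fun t => v ∈ t), α v t := by
    intro v hvQ
    rw [hr v]
    refine (Finset.sum_subset ?_ ?_).symm
    · intro t htm
      simp only [hD, mem_filter] at htm ⊢
      exact ⟨htm.1.1, htm.2⟩
    · intro t htm htm'
      simp only [mem_filter] at htm
      simp only [hD, mem_filter, htm.1, htm.2, and_true, true_and, not_and, not_not] at htm'
      by_contra hne
      have htS : t ⊆ S := hsupp v (hQS hvQ) t htm.1 htm.2 hne
      have : v ∈ S \ Q := htm' htS htm.2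
      exact (mem_sdiff.1 this).2 hvQ
  have h1 : r u * (Q.card : ℝ) ≤ ∑ v ∈ Q, r v := by
    have : ∑ v ∈ Q, r u ≤ ∑ v ∈ Q, r v :=
      Finset.sum_le_sum fun v hv => (mem_filter.1 (hQS hv)).2
    rw [Finset.sum_const, nsmul_eq_mul, mul_comm] at this
    exact this
  have h2 : ∑ v ∈ Q, r v ≤ (D.card : ℝ) := by
    calc ∑ v ∈ Q, r v = ∑ v ∈ Q, ∑ t ∈ D, if v ∈ t then α v t else 0 := by
          refine Finset.sum_congr rfl fun v hv => ?_
          rw [hrv v hv, Finset.sum_filter]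
      _ = ∑ t ∈ D, ∑ v ∈ Q, if v ∈ t then α v t else 0 := Finset.sum_comm
      _ ≤ ∑ t ∈ D, 1 := by
          refine Finset.sum_le_sum fun t htD => ?_
          have htT : t ∈ triFinset G := (mem_filter.1 htD).1
          rw [← Finset.sum_filter, ← hsum t htT]
          refine Finset.sum_le_sum_of_subset_of_nonneg ?_ ?_
          · intro x hx; exact (mem_filter.1 hx).2
          · intro x hx _; exact hnn t htT x hx
      _ = (D.card : ℝ) := by simp
  have h3 : (D.card : ℝ) = (triCount G S : ℝ) - (triCount G (S \ Q) : ℝ) := by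
    have hAB : (triFinset G).filter (fun t => t ⊆ S \ Q) ⊆ (triFinset G).filter (fun t => t ⊆ S) := by
      intro t ht
      simp only [mem_filter] at ht ⊢
      exact ⟨ht.1, ht.2.trans (sdiff_subset)⟩
    have hDeq : D = (triFinset G).filter (fun t => t ⊆ S) \ (triFinset G).filter (fun t => t ⊆ S \ Q) := by
      ext t
      simp only [hD, mem_filter, mem_sdiff, not_and]
      tauto
    rw [hDeq, card_sdiff_of_subset hAB, Nat.cast_sub (card_le_card hAB)]
    rfl
  linarith
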